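/- arXiv:math/0405084 — 5 statements merged into one kernel-verified Lean document; each statement's English description precedes it below -/
import Mathlib

section
/- If g : S¹ → S¹ is an orientation-preserving homeomorphism, G₁, G₂ : ℝ → ℝ are two lifts of g under the covering map Π(θ) = e^{2πiθ}, and x ∈ ℝ, then the limits lim_{n→∞} G₁ⁿ(x)/n and lim_{n→∞} G₂ⁿ(x)/n both exist and differ by an integer. -/
open Filter Topology

lemma P_eq_iff (P : ℝ → Metric.sphere (0:ℂ) 1)
    (hP : ∀ θ : ℝ, (P θ : ℂ) = Complex.exp (2 * Real.pi * θ * Complex.I)) (a b : ℝ) :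
    P a = P b ↔ ∃ m : ℤ, a - b = (m : ℝ) := by
  have h2pi : (2 * (Real.pi : ℂ) * Complex.I) ≠ 0 := by
    simp [Real.pi_ne_zero, Complex.I_ne_zero]
  constructor
  · intro h
    have hc : Complex.exp (2 * Real.pi * a * Complex.I) =
        Complex.exp (2 * Real.pi * b * Complex.I) := by
      rw [← hP a, ← hP b, h]
    obtain ⟨n, hn⟩ := (Complex.exp_eq_exp_iff_exists_int).1 hc
    refine ⟨n, ?_⟩
    have : (2 * (Real.pi : ℂ) * Complex.I) * a = (2 * (Real.pi : ℂ) * Complex.I) * (b + n) := by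
      linear_combination hn
    have := mul_left_cancel₀ h2pi this
    have : (a : ℂ) - b = n := by linear_combination this
    exact_mod_cast this
  · rintro ⟨m, hm⟩
    have hab : (a : ℝ) = b + m := by linarith
    apply Subtype.ext
    rw [hP a, hP b, Complex.exp_eq_exp_iff_exists_int]
    exact ⟨m, by rw [hab]; push_cast; ring⟩

lemma deg_one (g : Metric.sphere (0:ℂ) 1 ≃ₜ Metric.sphere (0:ℂ) 1)
    (P : ℝ → Metric.sphere (0:ℂ) 1)
    (hP : ∀ θ : ℝ, (P θ : ℂ) = Complex.exp (2 * Real.pi * θ * Complex.I))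
    (G : ℝ ≃ₜ ℝ) (hmono : StrictMono G)
    (hlift : ∀ θ : ℝ, P (G θ) = g (P θ)) (θ : ℝ) :
    G (θ + 1) = G θ + 1 := by
  -- G (θ+1) - G θ is an integer k ≥ 1
  have h1 : P (θ + 1) = P θ := (P_eq_iff P hP _ _).2 ⟨1, by ring⟩
  have hk : P (G (θ + 1)) = P (G θ) := by rw [hlift, hlift, h1]
  obtain ⟨k, hk⟩ := (P_eq_iff P hP _ _).1 hk
  have hk1 : (1 : ℝ) ≤ k := by
    have : G θ < G (θ + 1) := hmono (by linarith)
    have : (0:ℝ) < k := by linarith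
    exact_mod_cast this
  -- θ' := G⁻¹ (G θ + 1)
  set θ' := G.symm (G θ + 1) with hθ'
  have hGθ' : G θ' = G θ + 1 := G.apply_symm_apply _
  have hgP : g (P θ') = g (P θ) := by
    rw [← hlift, ← hlift, hGθ']
    exact (P_eq_iff P hP _ _).2 ⟨1, by ring⟩
  have hPθ' : P θ' = P θ := g.injective hgP
  obtain ⟨m, hm⟩ := (P_eq_iff P hP _ _).1 hPθ'
  have hθ'gt : θ < θ' := by
    have : G θ < G θ' := by rw [hGθ']; linarith
    exact hmono.lt_iff_lt.1 this
  have hm1 : (1 : ℝ) ≤ m := by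
    have : (0:ℝ) < m := by linarith
    exact_mod_cast this
  -- θ' = θ + m ≥ θ + 1 so G θ' ≥ G (θ+1), i.e. G θ + 1 ≥ G θ + k, so k ≤ 1
  have hle : G (θ + 1) ≤ G θ' := hmono.monotone (by linarith)
  have hkle : (k : ℝ) ≤ 1 := by rw [hGθ'] at hle; linarith
  have : (k : ℝ) = 1 := le_antisymm hkle hk1
  linarith [hk]

/-- Two lifts of an orientation-preserving circle homeomorphism give rotation
number limits that exist and differ by an integer. -/
theorem stmt0
    (g : Metric.sphere (0:ℂ) 1 ≃ₜ Metric.sphere (0:ℂ) 1)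
    (P : ℝ → Metric.sphere (0:ℂ) 1)
    (hP : ∀ θ : ℝ, (P θ : ℂ) = Complex.exp (2 * Real.pi * θ * Complex.I))
    (G₁ G₂ : ℝ ≃ₜ ℝ)
    (hmono₁ : StrictMono G₁) (hmono₂ : StrictMono G₂)
    (hlift₁ : ∀ θ : ℝ, P (G₁ θ) = g (P θ))
    (hlift₂ : ∀ θ : ℝ, P (G₂ θ) = g (P θ))
    (x : ℝ) :
    ∃ L₁ L₂ : ℝ,
      Tendsto (fun n : ℕ => (⇑G₁)^[n] x / (n : ℝ)) atTop (𝓝 L₁) ∧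
      Tendsto (fun n : ℕ => (⇑G₂)^[n] x / (n : ℝ)) atTop (𝓝 L₂) ∧
      ∃ m : ℤ, L₁ - L₂ = (m : ℝ) := by
  set f₁ : CircleDeg1Lift := ⟨⟨⇑G₁, hmono₁.monotone⟩, deg_one g P hP G₁ hmono₁ hlift₁⟩
  set f₂ : CircleDeg1Lift := ⟨⟨⇑G₂, hmono₂.monotone⟩, deg_one g P hP G₂ hmono₂ hlift₂⟩
  have hf₁ : ⇑f₁ = ⇑G₁ := rfl
  have hf₂ : ⇑f₂ = ⇑G₂ := rfl
  have key : ∀ (f : CircleDeg1Lift),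
      Tendsto (fun n : ℕ => (⇑f)^[n] x / (n : ℝ)) atTop (𝓝 f.translationNumber) := by
    intro f
    have h1 := f.tendsto_translationNumber x
    have h2 : Tendsto (fun n : ℕ => x / (n : ℝ)) atTop (𝓝 0) :=
      tendsto_const_nhds.div_atTop tendsto_natCast_atTop_atTop
    have := h1.add h2
    rw [add_zero] at this
    refine this.congr fun n => ?_
    rw [CircleDeg1Lift.coe_pow]
    ring
  refine ⟨f₁.translationNumber, f₂.translationNumber, by rw [← hf₁]; exact key f₁,
    by rw [← hf₂]; exact key f₂, ?_⟩
  -- G₁ 0 - G₂ 0 = m, and then by IVT-free induction, f₁^n x = f₂^n x + n*m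
  have hdiff : ∀ θ, ∃ m : ℤ, G₁ θ - G₂ θ = (m : ℝ) := by
    intro θ
    apply (P_eq_iff P hP _ _).1
    rw [hlift₁, hlift₂]
  -- continuity: the integer-valued continuous function θ ↦ G₁ θ - G₂ θ is constant
  obtain ⟨m, hm⟩ := hdiff 0
  have hconst : ∀ θ, G₁ θ - G₂ θ = (m : ℝ) := by
    intro θ
    by_contra hne
    obtain ⟨k, hk⟩ := hdiff θ
    have hkm : k ≠ m := by rintro rfl; exact hne hk
    have hcont : Continuous fun t : ℝ => G₁ t - G₂ t :=
      G₁.continuous.sub G₂.continuous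
    -- intermediate value: some value strictly between k and m is attained; it is not an integer
    have hmem : ∀ c ∈ Set.uIcc ((m:ℝ)) ((k:ℝ)), c ∈ Set.range (fun t : ℝ => G₁ t - G₂ t) := by
      intro c hc
      have h2 := intermediate_value_uIcc (a := (0:ℝ)) (b := θ)
        (f := fun t : ℝ => G₁ t - G₂ t) hcont.continuousOn
      simp only [hm, hk] at h2
      exact Set.image_subset_range _ _ (h2 hc)
    -- pick c = m ± 1/2, a non-integer strictly between m and k
    set c : ℝ := if (m:ℝ) < k then (m:ℝ) + 1/2 else (m:ℝ) - 1/2 with hc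
    have hkm' : ((k:ℝ)) ≠ m := by exact_mod_cast fun h => hkm (by exact_mod_cast h)
    have hsep : |((k:ℝ)) - m| ≥ 1 := by
      have h1 : (1:ℤ) ≤ |k - m| := Int.one_le_abs (sub_ne_zero.2 hkm)
      calc (1:ℝ) ≤ ((|k - m| : ℤ) : ℝ) := by exact_mod_cast h1
        _ = |((k:ℝ) - m)| := by push_cast; rfl
    have hcmem : c ∈ Set.uIcc ((m:ℝ)) ((k:ℝ)) := by
      rcases lt_or_ge ((m:ℝ)) ((k:ℝ)) with h | h
      · have : c = (m:ℝ) + 1/2 := by rw [hc, if_pos h]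
        rw [this, Set.uIcc_of_le h.le]
        have : (m:ℝ) + 1 ≤ k := by
          rw [abs_of_pos (by linarith)] at hsep; linarith
        exact ⟨by linarith, by linarith⟩
      · have hlt : ¬ ((m:ℝ) < k) := not_lt.2 h
        have : c = (m:ℝ) - 1/2 := by rw [hc, if_neg hlt]
        have h' : (k:ℝ) < m := lt_of_le_of_ne h hkm'
        rw [this, Set.uIcc_of_ge h]
        have : (k:ℝ) ≤ m - 1 := by
          rw [abs_of_neg (by linarith)] at hsep; linarith
        exact ⟨by linarith, by linarith⟩
    obtain ⟨t, ht⟩ := hmem c hcmem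
    obtain ⟨j, hj⟩ := hdiff t
    have hcj : c = (j : ℝ) := by rw [← ht]; simpa using hj
    -- c = j means |j - m| = 1/2, impossible for integers
    have habs : |((j:ℝ)) - m| = 1/2 := by
      rcases lt_or_ge ((m:ℝ)) ((k:ℝ)) with h | h
      · have : c = (m:ℝ) + 1/2 := by rw [hc, if_pos h]
        rw [this] at hcj
        rw [show ((j:ℝ)) - m = 1/2 by linarith]
        norm_num
      · have : c = (m:ℝ) - 1/2 := by rw [hc, if_neg (not_lt.2 h)]
        rw [this] at hcj
        rw [show ((j:ℝ)) - m = -(1/2) by linarith]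
        norm_num
    rcases eq_or_ne j m with rfl | hjm
    · simp at habs
    · have h1 : (1:ℤ) ≤ |j - m| := Int.one_le_abs (sub_ne_zero.2 hjm)
      have : (1:ℝ) ≤ |((j:ℝ)) - m| := by
        calc (1:ℝ) ≤ ((|j - m| : ℤ) : ℝ) := by exact_mod_cast h1
          _ = |((j:ℝ)) - m| := by push_cast; rfl
      linarith [habs ▸ this]
  -- iterates: G₁^[n] x = G₂^[n] x + n * m
  have hiter : ∀ n : ℕ, (⇑G₁)^[n] x = (⇑G₂)^[n] x + (n : ℝ) * m := by
    intro n
    induction n with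
    | zero => simp
    | succ n ih =>
      rw [Function.iterate_succ_apply', Function.iterate_succ_apply', ih]
      have h1 : G₁ ((⇑G₂)^[n] x + (n:ℝ) * m) =
          G₂ ((⇑G₂)^[n] x + (n:ℝ) * m) + m := by
        have := hconst ((⇑G₂)^[n] x + (n:ℝ) * m)
        linarith
      rw [h1]
      have h2 : G₂ ((⇑G₂)^[n] x + (n:ℝ) * m) = G₂ ((⇑G₂)^[n] x) + (n:ℝ) * m := by
        have := f₂.map_add_int ((⇑G₂)^[n] x) ((n : ℤ) * m)
        rw [hf₂] at this
        push_cast at this ⊢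
        convert this using 2
      rw [h2]
      push_cast
      ring
  -- conclude: limits differ by m
  refine ⟨m, ?_⟩
  have hL1 : Tendsto (fun n : ℕ => (⇑G₁)^[n] x / (n : ℝ)) atTop
      (𝓝 (f₂.translationNumber + m)) := by
    have h2 : Tendsto (fun n : ℕ => (⇑G₂)^[n] x / (n : ℝ) + m) atTop
        (𝓝 (f₂.translationNumber + m)) := by
      have := key f₂
      rw [hf₂] at this
      exact this.add tendsto_const_nhds
    refine h2.congr' ?_
    filter_upwards [eventually_gt_atTop 0] with n hn
    have hn' : (n : ℝ) ≠ 0 := Nat.cast_ne_zero.2 hn.ne'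
    rw [hiter n]
    field_simp
  have hL1' : Tendsto (fun n : ℕ => (⇑G₁)^[n] x / (n : ℝ)) atTop
      (𝓝 f₁.translationNumber) := by
    have := key f₁; rwa [hf₁] at this
  have := tendsto_nhds_unique hL1' hL1
  linarith
end

section
/- If G : ℝ → ℝ is a strictly increasing homeomorphism commuting with translation by 1 (i.e., G(x+1) = G(x)+1 for all x), then for every x, y ∈ ℝ the limits lim_{n→∞} Gⁿ(x)/n and lim_{n→∞} Gⁿ(y)/n exist and are equal. -/
open Filter Topology

/-- For a strictly increasing homeomorphism of `ℝ` commuting with the unit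
translation, the limits `Gⁿ(x)/n` exist and are independent of the base
point. -/
theorem stmt3
    (G : ℝ ≃ₜ ℝ)
    (hmono : StrictMono G)
    (hcomm : ∀ x : ℝ, G (x + 1) = G x + 1)
    (x y : ℝ) :
    ∃ L : ℝ,
      Tendsto (fun n : ℕ => (⇑G)^[n] x / (n : ℝ)) atTop (𝓝 L) ∧
      Tendsto (fun n : ℕ => (⇑G)^[n] y / (n : ℝ)) atTop (𝓝 L) := by
  set f : CircleDeg1Lift := ⟨⟨⇑G, hmono.monotone⟩, hcomm⟩ with hf
  have key : ∀ z : ℝ,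
      Tendsto (fun n : ℕ => (⇑G)^[n] z / (n : ℝ)) atTop (𝓝 (CircleDeg1Lift.translationNumber f)) := by
    intro z
    have h1 := f.tendsto_translationNumber z
    have h2 : Tendsto (fun n : ℕ => z / (n : ℝ)) atTop (𝓝 0) :=
      tendsto_const_nhds.div_atTop tendsto_natCast_atTop_atTop
    have := h1.add h2
    rw [add_zero] at this
    refine this.congr fun n => ?_
    have : ⇑(f ^ n) = (⇑G)^[n] := f.coe_pow n
    rw [this]
    ring
  exact ⟨_, key x, key y⟩
end

section
/- Suppose g₁, g₂ : S¹ → S¹ are orientation-preserving homeomorphisms and B ⊆ S¹ is a nonempty set with g₁(B) = B and g₁ restricted to B equals g₂ restricted to B. Then g₁ and g₂ have the same rotation number. -/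
open Filter Topology

private lemma stmt4_intconst_aux (f : ℝ → ℝ) (hf : Continuous f)
    (hint : ∀ y, ∃ m : ℤ, f y = m) (a b : ℝ) : f a = f b := by
  by_contra hne
  obtain ⟨ma, hma⟩ := hint a
  obtain ⟨mb, hmb⟩ := hint b
  have hmamb : ma ≠ mb := by
    intro h; apply hne; rw [hma, hmb, h]
  have hmem : ((min ma mb : ℤ) : ℝ) + 1/2 ∈ Set.uIcc (f a) (f b) := by
    rw [Set.mem_uIcc, hma, hmb]
    rcases lt_or_ge ma mb with h | h
    · left
      have h0 : ((min ma mb : ℤ):ℝ) = (ma:ℝ) := by exact_mod_cast min_eq_left h.le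
      have h1 : ((min ma mb : ℤ) : ℝ) + 1 ≤ (mb : ℝ) := by
        exact_mod_cast (by omega : min ma mb + 1 ≤ mb)
      constructor <;> linarith
    · have h' : mb < ma := lt_of_le_of_ne h (Ne.symm hmamb)
      right
      have h0 : ((min ma mb : ℤ):ℝ) = (mb:ℝ) := by exact_mod_cast min_eq_right h'.le
      have h1 : ((min ma mb : ℤ) : ℝ) + 1 ≤ (ma : ℝ) := by
        exact_mod_cast (by omega : min ma mb + 1 ≤ ma)
      constructor <;> linarith
  obtain ⟨c, _, hc⟩ := intermediate_value_uIcc (f := f) hf.continuousOn hmem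
  obtain ⟨m, hm⟩ := hint c
  rw [hm] at hc
  have : (2 * m : ℤ) = (2 * min ma mb + 1 : ℤ) := by
    exact_mod_cast show ((2*m : ℤ) : ℝ) = ((2 * min ma mb + 1 : ℤ) : ℝ) by
      push_cast at hc ⊢; linarith
  omega

/-- Two orientation-preserving circle homeomorphisms that agree on a nonempty
invariant set have the same rotation number (mod 1). -/
theorem stmt4
    (g₁ g₂ : Metric.sphere (0:ℂ) 1 ≃ₜ Metric.sphere (0:ℂ) 1)
    (P : ℝ → Metric.sphere (0:ℂ) 1)
    (hP : ∀ θ : ℝ, (P θ : ℂ) = Complex.exp (2 * Real.pi * θ * Complex.I))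
    (G₁ G₂ : ℝ ≃ₜ ℝ)
    (hmono₁ : StrictMono G₁) (hmono₂ : StrictMono G₂)
    (hlift₁ : ∀ θ : ℝ, P (G₁ θ) = g₁ (P θ))
    (hlift₂ : ∀ θ : ℝ, P (G₂ θ) = g₂ (P θ))
    (B : Set (Metric.sphere (0:ℂ) 1))
    (hBne : B.Nonempty)
    (hBinv : g₁ '' B = B)
    (hag : Set.EqOn (⇑g₁) (⇑g₂) B)
    (x : ℝ) :
    ∃ L₁ L₂ : ℝ,
      Tendsto (fun n : ℕ => (⇑G₁)^[n] x / (n : ℝ)) atTop (𝓝 L₁) ∧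
      Tendsto (fun n : ℕ => (⇑G₂)^[n] x / (n : ℝ)) atTop (𝓝 L₂) ∧
      ∃ m : ℤ, L₁ - L₂ = (m : ℝ) := by
  have h2pi : (2 * (Real.pi : ℂ) * Complex.I) ≠ 0 :=
    mul_ne_zero (mul_ne_zero two_ne_zero (Complex.ofReal_ne_zero.2 Real.pi_ne_zero))
      Complex.I_ne_zero
  -- lifts of the same point differ by an integer
  have hPeq : ∀ θ θ' : ℝ, P θ = P θ' ↔ ∃ m : ℤ, θ = θ' + m := by
    intro θ θ'
    rw [Subtype.ext_iff, hP, hP, Complex.exp_eq_exp_iff_exists_int]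
    constructor
    · rintro ⟨n, hn⟩
      refine ⟨n, ?_⟩
      have hc : (θ : ℂ) * (2 * (Real.pi:ℂ) * Complex.I)
          = ((θ' : ℂ) + n) * (2 * (Real.pi:ℂ) * Complex.I) := by
        linear_combination hn
      have := mul_right_cancel₀ h2pi hc
      exact_mod_cast this
    · rintro ⟨n, hn⟩
      exact ⟨n, by rw [hn]; push_cast; ring⟩
  -- both G₁ and G₂ commute with translation by 1
  have per : ∀ (g : Metric.sphere (0:ℂ) 1 ≃ₜ Metric.sphere (0:ℂ) 1) (G : ℝ ≃ₜ ℝ),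
      StrictMono G → (∀ θ : ℝ, P (G θ) = g (P θ)) → ∀ θ : ℝ, G (θ + 1) = G θ + 1 := by
    intro g G hmono hlift θ
    have hint : ∀ y : ℝ, ∃ m : ℤ, G (y + 1) - G y = m := by
      intro y
      have h1 : P (y + 1) = P y := (hPeq _ _).2 ⟨1, by push_cast; ring⟩
      have h2 : P (G (y + 1)) = P (G y) := by rw [hlift, hlift, h1]
      obtain ⟨m, hm⟩ := (hPeq _ _).1 h2
      exact ⟨m, by linarith⟩
    have hconst : ∀ y : ℝ, G (y + 1) - G y = G (θ + 1) - G θ :=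
      fun y => stmt4_intconst_aux _ (by continuity) hint y θ
    obtain ⟨k, hk⟩ := hint θ
    have hkpos : 0 < k := by
      have h1 : G θ < G (θ + 1) := hmono (by linarith)
      exact_mod_cast show (0:ℝ) < (k:ℝ) by linarith
    have hG1 : G 1 = G 0 + k := by
      have := hconst 0
      rw [hk] at this
      rw [show (1:ℝ) = 0 + 1 by ring]
      linarith
    have hmem : G 0 + 1 ∈ Set.Icc (G 0) (G 1) := by
      constructor
      · linarith
      · rw [hG1]
        have : (1:ℝ) ≤ k := by exact_mod_cast hkpos
        linarith
    obtain ⟨θc, hθc, hGθc⟩ := intermediate_value_Icc (by norm_num : (0:ℝ) ≤ 1)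
      (G.continuous.continuousOn) hmem
    have hP1 : P (G 0 + 1) = P (G 0) := (hPeq _ _).2 ⟨1, by push_cast; ring⟩
    have h3 : P (G θc) = P (G 0) := by rw [hGθc, hP1]
    rw [hlift, hlift] at h3
    have h4 : P θc = P 0 := g.injective h3
    obtain ⟨m, hm⟩ := (hPeq _ _).1 h4
    rw [zero_add] at hm
    obtain ⟨h0, h1⟩ := hθc
    have hm0 : (0:ℤ) ≤ m := by exact_mod_cast hm ▸ h0
    have hm1 : m ≤ 1 := by exact_mod_cast hm ▸ h1
    interval_cases m
    · simp at hm
      rw [hm] at hGθc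
      linarith
    · have : θc = 1 := by rw [hm]; norm_num
      rw [this, hG1] at hGθc
      have hk1 : (k:ℝ) = 1 := by linarith
      have : k = 1 := by exact_mod_cast hk1
      rw [this] at hk
      push_cast at hk
      linarith
  -- package as CircleDeg1Lift
  set F₁ : CircleDeg1Lift :=
    ⟨⟨⇑G₁, hmono₁.monotone⟩, per g₁ G₁ hmono₁ hlift₁⟩ with hF₁def
  set F₂ : CircleDeg1Lift :=
    ⟨⟨⇑G₂, hmono₂.monotone⟩, per g₂ G₂ hmono₂ hlift₂⟩ with hF₂def
  have hF₁ : ⇑F₁ = ⇑G₁ := rfl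
  have hF₂ : ⇑F₂ = ⇑G₂ := rfl
  -- the limits exist
  have hlim : ∀ (F : CircleDeg1Lift) (G : ℝ ≃ₜ ℝ), ⇑F = ⇑G → ∀ y : ℝ,
      Tendsto (fun n : ℕ => (⇑G)^[n] y / (n:ℝ)) atTop (𝓝 F.translationNumber) := by
    intro F G hFG y
    have h1 := F.tendsto_translationNumber y
    have h2 : Tendsto (fun n : ℕ => y / (n:ℝ)) atTop (𝓝 0) :=
      tendsto_const_div_atTop_nhds_zero_nat y
    have h3 := h1.add h2
    rw [add_zero] at h3
    refine h3.congr fun n => ?_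
    have hc : ⇑(F ^ n) = (⇑G)^[n] := by rw [CircleDeg1Lift.coe_pow, hFG]
    rw [hc]
    ring
  -- the orbit point
  obtain ⟨b, hb⟩ := hBne
  have hθ₀ : ∃ θ₀ : ℝ, P θ₀ = b := by
    refine ⟨(b:ℂ).arg / (2 * Real.pi), ?_⟩
    have habs : ‖(b:ℂ)‖ = 1 := by
      have := b.2
      simpa [Complex.dist_eq] using this
    apply Subtype.ext
    rw [hP]
    have hpi : ((Real.pi:ℝ) : ℂ) ≠ 0 := Complex.ofReal_ne_zero.2 Real.pi_ne_zero
    have harg : (2 * (Real.pi:ℂ) * (((b:ℂ).arg / (2 * Real.pi) : ℝ):ℂ) * Complex.I)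
        = (b:ℂ).arg * Complex.I := by
      push_cast
      field_simp
    rw [harg]
    have := Complex.norm_mul_exp_arg_mul_I (b:ℂ)
    rw [habs] at this
    simpa using this
  obtain ⟨θ₀, hθ₀b⟩ := hθ₀
  -- on lifts of B, G₂ - G₁ is an integer
  have Dint : ∀ θ : ℝ, P θ ∈ B → ∃ m : ℤ, G₂ θ = G₁ θ + m := by
    intro θ hθ
    have h1 : P (G₂ θ) = P (G₁ θ) := by
      rw [hlift₁, hlift₂, ← hag hθ]
    exact (hPeq _ _).1 h1
  -- and it is the same integer at all lifts of points of B
  have Dconst : ∀ θ θ' : ℝ, P θ ∈ B → P θ' ∈ B →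
      G₂ θ - G₁ θ = G₂ θ' - G₁ θ' := by
    intro θ θ' hθ hθ'
    set k : ℤ := ⌊θ' - θ⌋ with hkdef
    set θ'' : ℝ := θ' - k with hθ''def
    have hPθ'' : P θ' = P θ'' := (hPeq _ _).2 ⟨k, by rw [hθ''def]; ring⟩
    have hθ''B : P θ'' ∈ B := hPθ'' ▸ hθ'
    have hG1'' : G₁ θ'' = G₁ θ' - k := by
      have h2 : G₁ (θ'' + k) = G₁ θ'' + k := F₁.map_add_int θ'' k
      rw [show θ'' + (k:ℝ) = θ' by rw [hθ''def]; ring] at h2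
      linarith
    have hG2'' : G₂ θ'' = G₂ θ' - k := by
      have h2 : G₂ (θ'' + k) = G₂ θ'' + k := F₂.map_add_int θ'' k
      rw [show θ'' + (k:ℝ) = θ' by rw [hθ''def]; ring] at h2
      linarith
    have hsuff : G₂ θ - G₁ θ = G₂ θ'' - G₁ θ'' := by
      obtain ⟨m, hm⟩ := Dint θ hθ
      obtain ⟨m', hm'⟩ := Dint θ'' hθ''B
      have hb1 : θ ≤ θ'' := by
        have := Int.floor_le (θ' - θ)
        rw [hθ''def]; linarith
      have hb2 : θ'' < θ + 1 := by
        have := Int.lt_floor_add_one (θ' - θ)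
        rw [hθ''def]; linarith
      rcases eq_or_lt_of_le hb1 with heq | hlt
      · rw [← heq]
      · have u1a : G₁ θ < G₁ θ'' := hmono₁ hlt
        have u1b : G₁ θ'' < G₁ θ + 1 := by
          have h5 : G₁ θ'' < G₁ (θ + 1) := hmono₁ hb2
          rw [per g₁ G₁ hmono₁ hlift₁ θ] at h5
          exact h5
        have u2a : G₂ θ < G₂ θ'' := hmono₂ hlt
        have u2b : G₂ θ'' < G₂ θ + 1 := by
          have h5 : G₂ θ'' < G₂ (θ + 1) := hmono₂ hb2
          rw [per g₂ G₂ hmono₂ hlift₂ θ] at h5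
          exact h5
        have hd1 : ((m' - m : ℤ) : ℝ) < 1 := by push_cast; linarith
        have hd2 : (-1:ℝ) < ((m' - m : ℤ) : ℝ) := by push_cast; linarith
        have he1 : (m' - m : ℤ) < 1 := by exact_mod_cast hd1
        have he2 : (-1 : ℤ) < m' - m := by exact_mod_cast hd2
        have : m = m' := by omega
        rw [hm, hm', this]
        ring
    rw [hsuff, hG1'', hG2'']
    ring
  -- B is forward invariant
  have hfwd : ∀ p : Metric.sphere (0:ℂ) 1, p ∈ B → g₁ p ∈ B := by
    intro p hp
    rw [← hBinv]
    exact Set.mem_image_of_mem _ hp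
  obtain ⟨a, ha⟩ := Dint θ₀ (hθ₀b.symm ▸ hb)
  -- the two orbits of θ₀ differ by n • a
  have claim : ∀ n : ℕ, P ((⇑G₁)^[n] θ₀) ∈ B ∧
      (⇑G₂)^[n] θ₀ = (⇑G₁)^[n] θ₀ + (n : ℝ) * (a : ℝ) := by
    intro n
    induction n with
    | zero => simpa using hθ₀b.symm ▸ hb
    | succ n ih =>
      obtain ⟨hmem, heq⟩ := ih
      set θn : ℝ := (⇑G₁)^[n] θ₀ with hθn
      constructor
      · rw [Function.iterate_succ_apply', ← hθn, hlift₁]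
        exact hfwd _ hmem
      · have hDa : G₂ θn - G₁ θn = G₂ θ₀ - G₁ θ₀ := Dconst θn θ₀ hmem (hθ₀b.symm ▸ hb)
        have hna : G₂ (θn + ((n:ℤ) * a : ℤ)) = G₂ θn + ((n:ℤ) * a : ℤ) :=
          F₂.map_add_int θn ((n:ℤ) * a)
        rw [Function.iterate_succ_apply', Function.iterate_succ_apply', heq, ← hθn]
        push_cast at hna
        rw [show θn + (n:ℝ) * (a:ℝ) = θn + (n:ℤ) * a by push_cast; ring]
        push_cast
        rw [hna]
        push_cast
        linarith
  -- conclude τ F₂ = τ F₁ + a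
  have hτeq : F₂.translationNumber = F₁.translationNumber + a := by
    have l2 : Tendsto (fun n : ℕ => (⇑G₂)^[n] θ₀ / (n:ℝ)) atTop (𝓝 F₂.translationNumber) :=
      hlim F₂ G₂ hF₂ θ₀
    have l1 : Tendsto (fun n : ℕ => (⇑G₁)^[n] θ₀ / (n:ℝ)) atTop (𝓝 F₁.translationNumber) :=
      hlim F₁ G₁ hF₁ θ₀
    have lc : Tendsto (fun n : ℕ => ((n:ℝ) * (a:ℝ)) / (n:ℝ)) atTop (𝓝 (a:ℝ)) := by
      have : ∀ᶠ n : ℕ in atTop, ((n:ℝ) * (a:ℝ)) / (n:ℝ) = (a:ℝ) := by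
        filter_upwards [eventually_ge_atTop 1] with n hn
        have hn' : (n:ℝ) ≠ 0 := by positivity
        field_simp
      exact Tendsto.congr' (Filter.EventuallyEq.symm this) tendsto_const_nhds
    have l3 : Tendsto (fun n : ℕ => (⇑G₂)^[n] θ₀ / (n:ℝ)) atTop
        (𝓝 (F₁.translationNumber + a)) := by
      have := l1.add lc
      refine this.congr fun n => ?_
      rw [(claim n).2, add_div]
    exact tendsto_nhds_unique l2 l3
  refine ⟨F₁.translationNumber, F₂.translationNumber, hlim F₁ G₁ hF₁ x,
    hlim F₂ G₂ hF₂ x, -a, ?_⟩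
  rw [hτeq]
  push_cast
  ring
end

section
/- Suppose A is a collection of at least 3 pairwise disjoint connected subsets of S¹ with dense union, each member equal to a point or an open interval, and h : A → A is an order preserving bijection. If g₁ and g₂ are orientation-preserving homeomorphisms of S¹ each compatible with h (gᵢ(J) = h(J) for all J ∈ A), then rot(g₁) = rot(g₂). -/
open Metric Filter Topology


lemma aux_Peq (P : ℝ → sphere (0:ℂ) 1)
    (hP : ∀ θ : ℝ, (P θ : ℂ) = Complex.exp (2 * Real.pi * θ * Complex.I)) :
    ∀ θ θ' : ℝ, P θ = P θ' ↔ ∃ k : ℤ, θ = θ' + k := by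
  intro θ θ'
  rw [Subtype.ext_iff, hP, hP, Complex.exp_eq_exp_iff_exists_int]
  constructor
  · rintro ⟨n, hn⟩
    refine ⟨n, ?_⟩
    have h2 : (2 * Real.pi * θ : ℂ) = 2 * Real.pi * θ' + n * (2 * Real.pi) := by
      apply mul_right_cancel₀ Complex.I_ne_zero
      rw [hn]; ring
    have h4 : 2 * Real.pi * θ = 2 * Real.pi * θ' + n * (2 * Real.pi) := by
      exact_mod_cast h2
    have hπ := Real.pi_pos
    nlinarith [h4]
  · rintro ⟨k, hk⟩
    exact ⟨k, by rw [hk]; push_cast; ring⟩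

lemma aux_Pcont (P : ℝ → sphere (0:ℂ) 1)
    (hP : ∀ θ : ℝ, (P θ : ℂ) = Complex.exp (2 * Real.pi * θ * Complex.I)) :
    Continuous P := by
  apply continuous_induced_rng.mpr
  have : (fun θ : ℝ => ((P θ : ℂ))) = fun θ : ℝ => Complex.exp (2 * Real.pi * θ * Complex.I) := by
    funext θ; exact hP θ
  show Continuous fun θ : ℝ => ((P θ : ℂ))
  rw [this]
  fun_prop

lemma aux_Psurj (P : ℝ → sphere (0:ℂ) 1)
    (hP : ∀ θ : ℝ, (P θ : ℂ) = Complex.exp (2 * Real.pi * θ * Complex.I)) :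
    Function.Surjective P := by
  intro z
  have hz : ‖(z : ℂ)‖ = 1 := by
    have := z.2
    simpa [Complex.dist_eq] using this
  refine ⟨Complex.arg (z : ℂ) / (2 * Real.pi), ?_⟩
  apply Subtype.ext
  rw [hP]
  have h2π : (2 * Real.pi : ℝ) ≠ 0 := by positivity
  have heq : (2 * Real.pi * ((Complex.arg (z:ℂ) / (2 * Real.pi) : ℝ) : ℂ) : ℂ) = (Complex.arg (z:ℂ) : ℂ) := by
    have hπ : (Real.pi : ℂ) ≠ 0 := by exact_mod_cast Real.pi_ne_zero
    push_cast
    field_simp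
  rw [heq]
  have := Complex.norm_mul_exp_arg_mul_I (z : ℂ)
  rw [hz] at this
  simpa using this

lemma aux_Popen (P : ℝ → sphere (0:ℂ) 1)
    (hPeq : ∀ θ θ' : ℝ, P θ = P θ' ↔ ∃ k : ℤ, θ = θ' + k)
    (hPcont : Continuous P) (hPsurj : Function.Surjective P) :
    IsOpenMap P := by
  intro U hU
  -- preimage of image is open (union of integer translates)
  have hW : IsOpen (P ⁻¹' (P '' U)) := by
    have : P ⁻¹' (P '' U) = ⋃ k : ℤ, (fun θ : ℝ => θ + k) ⁻¹' U := by
      ext θ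
      simp only [Set.mem_preimage, Set.mem_image, Set.mem_iUnion]
      constructor
      · rintro ⟨u, hu, he⟩
        rcases (hPeq u θ).mp he with ⟨k, hk⟩
        exact ⟨k, by rw [← hk]; exact hu⟩
      · rintro ⟨k, hk⟩
        exact ⟨θ + k, hk, ((hPeq (θ + k) θ).mpr ⟨k, rfl⟩)⟩
    rw [this]
    exact isOpen_iUnion fun k => hU.preimage (by fun_prop)
  -- complement is compact image
  have hKc : IsCompact (Set.Icc (0:ℝ) 1 ∩ (P ⁻¹' (P '' U))ᶜ) :=
    isCompact_Icc.inter_right hW.isClosed_compl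
  have himg : IsCompact (P '' (Set.Icc (0:ℝ) 1 ∩ (P ⁻¹' (P '' U))ᶜ)) := hKc.image hPcont
  have hcompl : P '' U = (P '' (Set.Icc (0:ℝ) 1 ∩ (P ⁻¹' (P '' U))ᶜ))ᶜ := by
    ext z
    constructor
    · rintro hz ⟨σ, ⟨_, hσ2⟩, hσ3⟩
      exact hσ2 (by rw [Set.mem_preimage, hσ3]; exact hz)
    · intro hz
      by_contra hzU
      rcases hPsurj z with ⟨θ, hθ⟩
      set θ' := θ - ⌊θ⌋ with hθ'
      have hPθ' : P θ' = z := by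
        rw [← hθ]
        exact (hPeq θ' θ).mpr ⟨-⌊θ⌋, by push_cast; ring⟩
      apply hz
      have hfr : θ' = Int.fract θ := rfl
      refine ⟨θ', ⟨⟨by rw [hfr]; exact Int.fract_nonneg θ, by rw [hfr]; exact (Int.fract_lt_one θ).le⟩, ?_⟩, hPθ'⟩
      intro hmem
      rw [Set.mem_preimage, hPθ'] at hmem
      exact hzU hmem
  rw [hcompl]
  exact himg.isClosed.isOpen_compl

lemma aux_int_ne {f : ℝ → ℝ} (hf : Continuous f) (hint : ∀ x, ∃ k : ℤ, f x = k)
    {x y : ℝ} (hlt : f x < f y) : False := by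
  obtain ⟨m, hm⟩ := hint x
  obtain ⟨n, hn⟩ := hint y
  have hmn : (m : ℝ) < n := by rw [← hm, ← hn]; exact hlt
  have hmn' : m < n := by exact_mod_cast hmn
  have ht : (m : ℝ) + 1/2 ∈ Set.uIcc (f x) (f y) := by
    rw [Set.mem_uIcc]
    left
    constructor
    · rw [hm]; linarith
    · rw [hn]
      have : (m : ℝ) + 1 ≤ n := by exact_mod_cast hmn'
      linarith
  obtain ⟨z, _, hz⟩ := intermediate_value_uIcc (hf.continuousOn (s := Set.uIcc x y)) ht
  obtain ⟨k, hk⟩ := hint z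
  rw [hk] at hz
  have h2 : ((2*k : ℤ) : ℝ) = ((2*m+1 : ℤ) : ℝ) := by push_cast; linarith
  have := Int.cast_injective h2
  omega

lemma aux_int_const {f : ℝ → ℝ} (hf : Continuous f) (hint : ∀ x, ∃ k : ℤ, f x = k) :
    ∀ x y, f x = f y := by
  intro x y
  rcases lt_trichotomy (f x) (f y) with hc | hc | hc
  · exact absurd hc (fun hc => aux_int_ne hf hint hc)
  · exact hc
  · exact absurd hc (fun hc => aux_int_ne hf hint hc)

lemma aux_deg1 (P : ℝ → sphere (0:ℂ) 1)
    (hPeq : ∀ θ θ' : ℝ, P θ = P θ' ↔ ∃ k : ℤ, θ = θ' + k)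
    (g : sphere (0:ℂ) 1 ≃ₜ sphere (0:ℂ) 1) (G : ℝ ≃ₜ ℝ) (hmono : StrictMono G)
    (hlift : ∀ θ : ℝ, P (G θ) = g (P θ)) :
    ∀ θ : ℝ, G (θ + 1) = G θ + 1 := by
  have hper : ∀ θ : ℝ, P (θ + 1) = P θ := fun θ => (hPeq (θ+1) θ).mpr ⟨1, by push_cast; ring⟩
  have hint : ∀ θ : ℝ, ∃ k : ℤ, G (θ + 1) - G θ = k := by
    intro θ
    have h1 : P (G (θ + 1)) = P (G θ) := by rw [hlift, hlift, hper]
    obtain ⟨k, hk⟩ := (hPeq _ _).mp h1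
    exact ⟨k, by linarith⟩
  have hcont : Continuous fun θ : ℝ => G (θ + 1) - G θ := by
    have := G.continuous
    fun_prop
  have hconst := aux_int_const hcont hint
  obtain ⟨k₀, hk₀⟩ := hint 0
  have hall : ∀ θ : ℝ, G (θ + 1) = G θ + k₀ := by
    intro θ
    have := hconst θ 0
    linarith [hk₀, this]
  -- k₀ ≥ 1
  have hpos : (0 : ℝ) < k₀ := by
    have := hmono (lt_add_one (0:ℝ))
    rw [hall 0] at this
    linarith
  have hk1 : (1 : ℤ) ≤ k₀ := by exact_mod_cast Int.add_one_le_of_lt (by exact_mod_cast hpos : (0:ℤ) < k₀)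
  -- k₀ ≤ 1
  have hk2 : k₀ ≤ 1 := by
    by_contra hgt
    push_neg at hgt
    have h2 : (2 : ℝ) ≤ k₀ := by exact_mod_cast hgt
    set s := G.symm (G 0 + 1) with hs
    have hGs : G s = G 0 + 1 := G.apply_symm_apply _
    have hs0 : 0 < s := by
      have : G 0 < G s := by rw [hGs]; linarith
      exact (hmono.lt_iff_lt).mp this
    have hs1 : s < 1 := by
      have : G s < G 1 := by
        rw [hGs]
        have := hall 0
        simp only [zero_add] at this
        linarith
      exact (hmono.lt_iff_lt).mp this
    have hPs : P (G s) = P (G 0) := by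
      rw [hGs]
      exact (hPeq _ _).mpr ⟨1, by push_cast; ring⟩
    rw [hlift, hlift] at hPs
    have hP0 : P s = P 0 := (EquivLike.injective g) hPs
    obtain ⟨k, hk⟩ := (hPeq _ _).mp hP0
    rw [zero_add] at hk
    have h1 : (0:ℤ) < k := by exact_mod_cast (hk ▸ hs0)
    have h2' : k < (1:ℤ) := by exact_mod_cast (hk ▸ hs1)
    omega
  have : k₀ = 1 := le_antisymm hk2 hk1
  intro θ
  rw [hall θ, this]
  norm_num


section
variable (P : ℝ → sphere (0:ℂ) 1)
    (hPeq : ∀ θ θ' : ℝ, P θ = P θ' ↔ ∃ k : ℤ, θ = θ' + k)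
    (hPsurj : Function.Surjective P)

include hPeq hPsurj

lemma aux_not_open_singleton (z : sphere (0:ℂ) 1) (hPcont : Continuous P) :
    ¬ IsOpen ({z} : Set (sphere (0:ℂ) 1)) := by
  intro hop
  obtain ⟨θ₀, hθ₀⟩ := hPsurj z
  have hpre : IsOpen (P ⁻¹' {z}) := hop.preimage hPcont
  have hθm : θ₀ ∈ P ⁻¹' {z} := by simp [hθ₀]
  obtain ⟨ε, hε, hball⟩ := Metric.isOpen_iff.mp hpre θ₀ hθm
  set δ := min (ε/2) (1/2) with hδ
  have hδpos : 0 < δ := by positivity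
  have hδlt : δ < 1 := lt_of_le_of_lt (min_le_right _ _) (by norm_num)
  have hmem : θ₀ + δ ∈ P ⁻¹' {z} := by
    apply hball
    simp only [Metric.mem_ball, Real.dist_eq]
    rw [abs_of_pos (by linarith : (0:ℝ) < θ₀ + δ - θ₀)]
    have : δ ≤ ε/2 := min_le_left _ _
    linarith
  have : P (θ₀ + δ) = P θ₀ := by
    simp only [Set.mem_preimage, Set.mem_singleton_iff] at hmem
    rw [hmem, hθ₀]
  obtain ⟨k, hk⟩ := (hPeq _ _).mp this
  have : (k : ℝ) = δ := by linarith
  have h1 : (0:ℤ) < k := by exact_mod_cast this ▸ hδpos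
  have h2 : k < (1:ℤ) := by exact_mod_cast this ▸ hδlt
  omega

lemma aux_gap_translate
    (hPopen : IsOpenMap P)
    (J : Set (sphere (0:ℂ) 1)) (hJconn : IsPreconnected J)
    (w : sphere (0:ℂ) 1) (hw : w ∉ J)
    (Bt : Set ℝ) (hBper : ∀ θ ∈ Bt, ∀ k : ℤ, θ + k ∈ Bt)
    (hBw : ∀ θ : ℝ, P θ = w → θ ∈ Bt)
    (hBJ : ∀ θ ∈ Bt, P θ ∉ J)
    (a b a' b' : ℝ) (hab : a < b) (hab' : a' < b')
    (ha : a ∈ Bt) (hb : b ∈ Bt) (ha' : a' ∈ Bt) (hb' : b' ∈ Bt)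
    (hga : Set.Ioo a b ∩ Bt = ∅) (hga' : Set.Ioo a' b' ∩ Bt = ∅)
    (hJa : ∀ θ ∈ Set.Ioo a b, P θ ∈ J) (hJa' : ∀ θ ∈ Set.Ioo a' b', P θ ∈ J) :
    ∃ k : ℤ, a' = a + k ∧ b' = b + k := by
  classical
  obtain ⟨c, hc⟩ := hPsurj w
  have hcB : ∀ k : ℤ, c + k ∈ Bt := hBper c (hBw c hc)
  -- length bounds
  have hlen : ∀ (a₁ b₁ : ℝ), a₁ < b₁ → a₁ ∈ Bt → Set.Ioo a₁ b₁ ∩ Bt = ∅ → b₁ ≤ a₁ + 1 := by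
    intro a₁ b₁ h1 h2 h3
    by_contra hgt
    push_neg at hgt
    have : a₁ + 1 ∈ Set.Ioo a₁ b₁ ∩ Bt :=
      ⟨⟨by linarith, hgt⟩, by simpa using hBper a₁ h2 1⟩
    rw [h3] at this
    exact this
  -- find a period base point l with P l = w, l ≤ a, b ≤ l + 1
  have hbase : ∀ (a₁ b₁ : ℝ), a₁ < b₁ → a₁ ∈ Bt → Set.Ioo a₁ b₁ ∩ Bt = ∅ →
      ∃ l : ℝ, P l = w ∧ l ∈ Bt ∧ l ≤ a₁ ∧ b₁ ≤ l + 1 := by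
    intro a₁ b₁ h1 h2 h3
    have hb1 : b₁ ≤ a₁ + 1 := hlen a₁ b₁ h1 h2 h3
    set k₀ : ℤ := ⌈a₁ - c⌉ with hk₀
    have hge : a₁ ≤ c + k₀ := by
      have := Int.le_ceil (a₁ - c)
      linarith
    have hlt : c + k₀ < a₁ + 1 := by
      have := Int.ceil_lt_add_one (a₁ - c)
      linarith
    have hnotin : c + (k₀:ℝ) ∉ Set.Ioo a₁ b₁ := by
      intro hmem
      have : c + (k₀:ℝ) ∈ Set.Ioo a₁ b₁ ∩ Bt := ⟨hmem, hcB k₀⟩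
      rw [h3] at this
      exact this
    have hPck : ∀ k : ℤ, P (c + k) = w := by
      intro k
      rw [← hc]
      exact (hPeq _ _).mpr ⟨k, rfl⟩
    rcases lt_or_ge a₁ (c + (k₀:ℝ)) with hcase | hcase
    · -- c + k₀ > a₁, so c + k₀ ≥ b₁ ; use l = c + k₀ - 1
      have hgeb : b₁ ≤ c + k₀ := by
        by_contra hlt2
        push_neg at hlt2
        exact hnotin ⟨hcase, hlt2⟩
      refine ⟨c + (k₀ - 1 : ℤ), hPck _, hcB _, ?_, ?_⟩
      · push_cast; linarith
      · push_cast; linarith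
    · -- c + k₀ ≤ a₁, so c + k₀ = a₁
      refine ⟨c + (k₀ : ℤ), hPck _, hcB _, by push_cast; linarith, by push_cast; linarith⟩
  obtain ⟨l, hlw, hlB, hla, hlb⟩ := hbase a b hab ha hga
  obtain ⟨l', hlw', hlB', hla', hlb'⟩ := hbase a' b' hab' ha' hga'
  obtain ⟨kw, hkw⟩ := (hPeq l' l).mp (by rw [hlw, hlw'])
  -- translate the second gap by -kw
  set a'' := a' - kw with ha''def
  set b'' := b' - kw with hb''def
  have hshift : ∀ θ : ℝ, P (θ - (kw:ℝ)) = P θ := fun θ => (hPeq _ _).mpr ⟨-kw, by push_cast; ring⟩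
  have ha''B : a'' ∈ Bt := by simpa [ha''def, sub_eq_add_neg] using hBper a' ha' (-kw)
  have hb''B : b'' ∈ Bt := by simpa [hb''def, sub_eq_add_neg] using hBper b' hb' (-kw)
  have hab'' : a'' < b'' := by simp only [ha''def, hb''def]; linarith
  have hga'' : Set.Ioo a'' b'' ∩ Bt = ∅ := by
    ext t
    simp only [Set.mem_inter_iff, Set.mem_Ioo, Set.mem_empty_iff_false, iff_false, not_and, and_imp]
    intro h1 h2 h3
    have : t + (kw:ℝ) ∈ Set.Ioo a' b' ∩ Bt :=
      ⟨⟨by simp only [ha''def] at h1; linarith, by simp only [hb''def] at h2; linarith⟩,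
        hBper t h3 kw⟩
    rw [hga'] at this
    exact this
  have hJa'' : ∀ θ ∈ Set.Ioo a'' b'', P θ ∈ J := by
    intro θ hθ
    have : θ + (kw:ℝ) ∈ Set.Ioo a' b' := by
      constructor
      · have := hθ.1; simp only [ha''def] at this; linarith
      · have := hθ.2; simp only [hb''def] at this; linarith
    have h2 := hJa' _ this
    rwa [show P (θ + (kw:ℝ)) = P θ from (hPeq _ _).mpr ⟨kw, rfl⟩] at h2
  have hla'' : l ≤ a'' := by simp only [ha''def]; rw [hkw] at hla'; linarith
  have hlb'' : b'' ≤ l + 1 := by simp only [hb''def]; rw [hkw] at hlb'; linarith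
  -- main claim : the two gaps coincide
  -- key sub-lemma : two gaps in [l, l+1] cannot be strictly ordered
  have key : ∀ (a₁ b₁ a₂ b₂ : ℝ), a₁ < b₁ → a₂ < b₂ → a₁ ∈ Bt → b₁ ∈ Bt →
      l ≤ a₁ → b₁ ≤ l + 1 → l ≤ a₂ → b₂ ≤ l + 1 → b₁ ≤ a₂ →
      (∀ θ ∈ Set.Ioo a₁ b₁, P θ ∈ J) → (∀ θ ∈ Set.Ioo a₂ b₂, P θ ∈ J) → False := by
    intro a₁ b₁ a₂ b₂ h1 h2 hB1 hB2 hl1 hr1 hl2 hr2 hord hJ1 hJ2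
    set V₁ := P '' Set.Ioo l b₁ with hV₁
    set V₂ := P '' Set.Ioo b₁ (l+1) with hV₂
    have hV₁o : IsOpen V₁ := hPopen _ isOpen_Ioo
    have hV₂o : IsOpen V₂ := hPopen _ isOpen_Ioo
    have hinj : ∀ σ₁ ∈ Set.Ioo l (l+1), ∀ σ₂ ∈ Set.Ioo l (l+1), P σ₁ = P σ₂ → σ₁ = σ₂ := by
      intro σ₁ hσ₁ σ₂ hσ₂ hPe
      obtain ⟨k, hk⟩ := (hPeq _ _).mp hPe
      have h1' : (-1:ℝ) < k := by
        have := hσ₁.1; have := hσ₂.2; linarith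
      have h2' : (k:ℝ) < 1 := by
        have := hσ₁.2; have := hσ₂.1; linarith
      have : k = 0 := by
        have hh1 : (-1:ℤ) < k := by exact_mod_cast h1'
        have hh2 : k < (1:ℤ) := by exact_mod_cast h2'
        omega
      rw [this] at hk
      simpa using hk
    have hdisj : Disjoint V₁ V₂ := by
      rw [Set.disjoint_iff_inter_eq_empty]
      ext z
      simp only [Set.mem_inter_iff, Set.mem_image, Set.mem_empty_iff_false, iff_false, not_and]
      rintro ⟨σ₁, hσ₁, hσ₁e⟩ ⟨σ₂, hσ₂, hσ₂e⟩
      have heq : σ₁ = σ₂ := by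
        apply hinj σ₁ ⟨hσ₁.1, by linarith [hσ₁.2, hord, h2, hr2]⟩ σ₂
          ⟨by linarith [hσ₂.1, h1, hl1], hσ₂.2⟩
        rw [hσ₁e, hσ₂e]
      rw [heq] at hσ₁
      linarith [hσ₁.2, hσ₂.1]
    have hsub : J ⊆ V₁ ∪ V₂ := by
      intro z hz
      obtain ⟨θz, hθz⟩ := hPsurj z
      set σ := l + Int.fract (θz - l) with hσdef
      have hPσ : P σ = z := by
        rw [← hθz]
        apply (hPeq _ _).mpr
        exact ⟨-⌊θz - l⌋, by rw [hσdef, Int.fract]; push_cast; ring⟩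
      have hσ1 : l ≤ σ := by
        have := Int.fract_nonneg (θz - l); simp only [hσdef]; linarith
      have hσ2 : σ < l + 1 := by
        have := Int.fract_lt_one (θz - l); simp only [hσdef]; linarith
      have hσnl : σ ≠ l := by
        intro he
        rw [he, hlw] at hPσ
        exact hw (hPσ ▸ hz)
      have hσnb : σ ≠ b₁ := by
        intro he
        rw [he] at hPσ
        exact hBJ b₁ hB2 (hPσ ▸ hz)
      rcases lt_or_ge σ b₁ with hcase | hcase
      · exact Or.inl ⟨σ, ⟨lt_of_le_of_ne hσ1 (Ne.symm hσnl), hcase⟩, hPσ⟩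
      · exact Or.inr ⟨σ, ⟨lt_of_le_of_ne hcase (Ne.symm hσnb), hσ2⟩, hPσ⟩
    have hne₁ : (J ∩ V₁).Nonempty := by
      refine ⟨P ((a₁ + b₁)/2), hJ1 _ ⟨by linarith, by linarith⟩, ⟨(a₁+b₁)/2, ⟨by linarith, by linarith⟩, rfl⟩⟩
    have hJV₁ := hJconn.subset_left_of_subset_union hV₁o hV₂o hdisj hsub hne₁
    -- but the midpoint of the second gap is in J and not in V₁
    have hmid₂ : P ((a₂ + b₂)/2) ∈ J := hJ2 _ ⟨by linarith, by linarith⟩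
    obtain ⟨σ₁, hσ₁, hσ₁e⟩ := hJV₁ hmid₂
    have : σ₁ = (a₂ + b₂)/2 := by
      apply hinj σ₁ ⟨hσ₁.1, by linarith [hσ₁.2]⟩ _ ⟨by linarith, by linarith⟩ hσ₁e
    rw [this] at hσ₁
    have := hσ₁.2
    linarith [hσ₁.2]
  -- conclude : gaps (a,b) and (a'',b'') must coincide
  have heq : a = a'' ∧ b = b'' := by
    by_contra hne
    -- first show they overlap, else use key
    rcases le_or_gt b a'' with hord | hord
    · exact absurd (key a b a'' b'' hab hab'' ha hb hla hlb hla'' hlb'' hord hJa hJa'') id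
    rcases le_or_gt b'' a with hord' | hord'
    · exact absurd (key a'' b'' a b hab'' hab ha''B hb''B hla'' hlb'' hla hlb hord' hJa'' hJa) id
    -- overlapping case : endpoints must agree
    have haa : a = a'' := by
      rcases lt_trichotomy a a'' with hlt | he | hgt
      · exfalso
        have : a'' ∈ Set.Ioo a b ∩ Bt := ⟨⟨hlt, by linarith⟩, ha''B⟩
        rw [hga] at this; exact this
      · exact he
      · exfalso
        have : a ∈ Set.Ioo a'' b'' ∩ Bt := ⟨⟨hgt, by linarith⟩, ha⟩
        rw [hga''] at this; exact this
    have hbb : b = b'' := by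
      rcases lt_trichotomy b b'' with hlt | he | hgt
      · exfalso
        have : b ∈ Set.Ioo a'' b'' ∩ Bt := ⟨⟨by rw [haa] at hab; exact hab, hlt⟩, hb⟩
        rw [hga''] at this; exact this
      · exact he
      · exfalso
        have : b'' ∈ Set.Ioo a b ∩ Bt := ⟨⟨by rw [← haa] at hab''; exact hab'', hgt⟩, hb''B⟩
        rw [hga] at this; exact this
    exact hne ⟨haa, hbb⟩
  refine ⟨kw, ?_, ?_⟩
  · have := heq.1; simp only [ha''def] at this; linarith
  · have := heq.2; simp only [hb''def] at this; linarith

end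

/-- If `A` is a collection of at least 3 pairwise disjoint point-or-open-interval
connected subsets of `S¹` with dense union, `h : A → A` is a bijection, and
`g₁, g₂` are orientation-preserving circle homeomorphisms each compatible with
`h` (i.e. `gᵢ(J) = h(J)` for all `J ∈ A`), then `g₁` and `g₂` have the same
rotation number (mod 1): with strictly increasing lifts `G₁, G₂` under the
covering `θ ↦ e^{2πiθ}`, the limits `Gᵢⁿ(x)/n` exist and differ by an
integer. -/
theorem stmt18
    (A : Set (Set (sphere (0:ℂ) 1)))
    (hcard : ∃ J₁ J₂ J₃, J₁ ∈ A ∧ J₂ ∈ A ∧ J₃ ∈ A ∧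
      J₁ ≠ J₂ ∧ J₁ ≠ J₃ ∧ J₂ ≠ J₃)
    (hdisj : A.PairwiseDisjoint id)
    (hdense : Dense (⋃₀ A))
    (hmem : ∀ J ∈ A, (∃ x, J = {x}) ∨ (IsOpen J ∧ IsConnected J))
    (h : Set (sphere (0:ℂ) 1) → Set (sphere (0:ℂ) 1))
    (hmaps : Set.MapsTo h A A) (hinj : Set.InjOn h A) (hsurj : Set.SurjOn h A A)
    (g₁ g₂ : sphere (0:ℂ) 1 ≃ₜ sphere (0:ℂ) 1)
    (hcomp₁ : ∀ J ∈ A, g₁ '' J = h J)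
    (hcomp₂ : ∀ J ∈ A, g₂ '' J = h J)
    (P : ℝ → sphere (0:ℂ) 1)
    (hP : ∀ θ : ℝ, (P θ : ℂ) = Complex.exp (2 * Real.pi * θ * Complex.I))
    (G₁ G₂ : ℝ ≃ₜ ℝ)
    (hmono₁ : StrictMono G₁) (hmono₂ : StrictMono G₂)
    (hlift₁ : ∀ θ : ℝ, P (G₁ θ) = g₁ (P θ))
    (hlift₂ : ∀ θ : ℝ, P (G₂ θ) = g₂ (P θ))
    (x : ℝ) :
    ∃ L₁ L₂ : ℝ,
      Tendsto (fun n : ℕ => (⇑G₁)^[n] x / (n : ℝ)) atTop (𝓝 L₁) ∧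
      Tendsto (fun n : ℕ => (⇑G₂)^[n] x / (n : ℝ)) atTop (𝓝 L₂) ∧
      ∃ m : ℤ, L₁ - L₂ = (m : ℝ) := by
  classical
  have hPeq := aux_Peq P hP
  have hPcont := aux_Pcont P hP
  have hPsurj := aux_Psurj P hP
  have hPopen := aux_Popen P hPeq hPcont hPsurj
  have hdeg1₁ := aux_deg1 P hPeq g₁ G₁ hmono₁ hlift₁
  have hdeg1₂ := aux_deg1 P hPeq g₂ G₂ hmono₂ hlift₂
  set F₁ : CircleDeg1Lift := ⟨⟨⇑G₁, hmono₁.monotone⟩, hdeg1₁⟩ with hF₁def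
  set F₂ : CircleDeg1Lift := ⟨⟨⇑G₂, hmono₂.monotone⟩, hdeg1₂⟩ with hF₂def
  have hF₁c : ⇑F₁ = ⇑G₁ := rfl
  have hF₂c : ⇑F₂ = ⇑G₂ := rfl
  -- members are nonempty
  have hmemne : ∀ J ∈ A, J.Nonempty := by
    intro J hJ
    rcases hmem J hJ with ⟨x', rfl⟩ | ⟨_, hc⟩
    · exact ⟨x', rfl⟩
    · exact hc.nonempty
  have huniq : ∀ M ∈ A, ∀ N ∈ A, ∀ z, z ∈ M → z ∈ N → M = N := by
    intro M hM N hN z hzM hzN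
    by_contra hne
    exact Set.disjoint_left.mp (hdisj hM hN hne) hzM hzN
  set Uo : Set (sphere (0:ℂ) 1) := ⋃₀ {J | J ∈ A ∧ IsOpen J} with hUodef
  have hUoopen : IsOpen Uo := isOpen_sUnion (fun J hJ => hJ.2)
  have hsing : ∀ z : sphere (0:ℂ) 1, ¬ IsOpen ({z} : Set (sphere (0:ℂ) 1)) :=
    fun z => aux_not_open_singleton P hPeq hPsurj z hPcont
  have hopenconn : ∀ J ∈ A, IsOpen J → IsPreconnected J := by
    intro J hJ hop
    rcases hmem J hJ with ⟨x', rfl⟩ | ⟨_, hc⟩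
    · exact absurd hop (hsing x')
    · exact hc.isPreconnected
  -- invariance of the union of open members
  have hUinv : ∀ (g : sphere (0:ℂ) 1 ≃ₜ sphere (0:ℂ) 1),
      (∀ J ∈ A, g '' J = h J) → g '' Uo = Uo := by
    intro g hcomp
    apply Set.Subset.antisymm
    · rintro z ⟨y, hy, rfl⟩
      obtain ⟨J, ⟨hJA, hJo⟩, hyJ⟩ := hy
      refine ⟨h J, ⟨hmaps hJA, ?_⟩, ?_⟩
      · rw [← hcomp J hJA]
        exact (Homeomorph.isOpenMap g) J hJo
      · rw [← hcomp J hJA]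
        exact ⟨y, hyJ, rfl⟩
    · intro z hz
      obtain ⟨K, ⟨hKA, hKo⟩, hzK⟩ := hz
      obtain ⟨J, hJA, hJK⟩ := hsurj hKA
      have hKg : g '' J = K := by rw [hcomp J hJA, hJK]
      have hJopen : IsOpen J := by
        rcases hmem J hJA with ⟨x', hx'⟩ | ⟨ho, _⟩
        · exfalso
          apply hsing (g x')
          have : K = {g x'} := by rw [← hKg, hx', Set.image_singleton]
          rwa [this] at hKo
        · exact ho
      rw [← hKg] at hzK
      obtain ⟨y, hyJ, hyz⟩ := hzK
      exact ⟨y, ⟨J, ⟨hJA, hJopen⟩, hyJ⟩, hyz⟩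
  have hUinv₁ : g₁ '' Uo = Uo := hUinv g₁ hcomp₁
  have hUinv₂ : g₂ '' Uo = Uo := hUinv g₂ hcomp₂
  set Bt : Set ℝ := (P ⁻¹' Uo)ᶜ with hBtdef
  have hBtclosed : IsClosed Bt := (hUoopen.preimage hPcont).isClosed_compl
  have hBper : ∀ θ ∈ Bt, ∀ k : ℤ, θ + (k:ℝ) ∈ Bt := by
    intro θ hθ k
    simp only [hBtdef, Set.mem_compl_iff, Set.mem_preimage] at hθ ⊢
    rwa [show P (θ + (k:ℝ)) = P θ from (hPeq _ _).mpr ⟨k, rfl⟩]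
  have hBtinv : ∀ θ ∈ Bt, G₁ θ ∈ Bt ∧ G₂ θ ∈ Bt := by
    intro θ hθ
    simp only [hBtdef, Set.mem_compl_iff, Set.mem_preimage] at hθ ⊢
    constructor
    · rw [hlift₁]
      intro hc
      rw [← hUinv₁] at hc
      obtain ⟨y, hy, hye⟩ := hc
      exact hθ ((EquivLike.injective g₁) hye ▸ hy)
    · rw [hlift₂]
      intro hc
      rw [← hUinv₂] at hc
      obtain ⟨y, hy, hye⟩ := hc
      exact hθ ((EquivLike.injective g₂) hye ▸ hy)
  -- existence of a point not covered by open members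
  have hex : ∃ p : sphere (0:ℂ) 1, p ∉ Uo := by
    by_contra hall
    push_neg at hall
    have hunivpc : IsPreconnected (Set.univ : Set (sphere (0:ℂ) 1)) := by
      have := (isPreconnected_univ (α := ℝ)).image P hPcont.continuousOn
      rwa [Set.image_univ, hPsurj.range_eq] at this
    obtain ⟨J₁, J₂, J₃, hJ₁, hJ₂, hJ₃, h12, h13, h23⟩ := hcard
    have hopenmem : ∀ J ∈ A, IsOpen J := by
      intro J hJA
      obtain ⟨z, hz⟩ := hmemne J hJA
      obtain ⟨K, ⟨hKA, hKo⟩, hzK⟩ := hall z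
      rwa [huniq J hJA K hKA z hz hzK]
    set V : Set (sphere (0:ℂ) 1) := ⋃₀ {J | J ∈ A ∧ IsOpen J ∧ J ≠ J₁} with hVdef
    have hVo : IsOpen V := isOpen_sUnion (fun J hJ => hJ.2.1)
    have hdisjV : Disjoint J₁ V := by
      rw [Set.disjoint_left]
      rintro z hz ⟨K, ⟨hKA, _, hKne⟩, hzK⟩
      exact hKne (huniq K hKA J₁ hJ₁ z hzK hz)
    have hcover : (Set.univ : Set (sphere (0:ℂ) 1)) ⊆ J₁ ∪ V := by
      intro z _
      obtain ⟨K, ⟨hKA, hKo⟩, hzK⟩ := hall z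
      by_cases hKJ : K = J₁
      · left; rwa [hKJ] at hzK
      · right; exact ⟨K, ⟨hKA, hKo, hKJ⟩, hzK⟩
    obtain ⟨z₁, hz₁⟩ := hmemne J₁ hJ₁
    have huJ₁ := hunivpc.subset_left_of_subset_union (hopenmem J₁ hJ₁) hVo hdisjV hcover
      ⟨z₁, Set.mem_univ _, hz₁⟩
    obtain ⟨z₂, hz₂⟩ := hmemne J₂ hJ₂
    have : z₂ ∈ J₁ := huJ₁ (Set.mem_univ _)
    exact h12 (huniq J₁ hJ₁ J₂ hJ₂ z₂ this hz₂)
  obtain ⟨p, hp⟩ := hex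
  obtain ⟨θ₀, hθ₀⟩ := hPsurj p
  have hθ₀B : θ₀ ∈ Bt := by
    simp only [hBtdef, Set.mem_compl_iff, Set.mem_preimage, hθ₀]
    exact hp
  set D : ℝ → ℝ := fun θ => G₁ θ - G₂ θ with hDdef
  have hDcont : Continuous D := by
    have h1 := G₁.continuous
    have h2 := G₂.continuous
    fun_prop
  -- the gap lemma
  have hDgap : ∀ a b : ℝ, a < b → a ∈ Bt → b ∈ Bt → Set.Ioo a b ∩ Bt = ∅ →
      (∃ k : ℤ, D a = k) ∧ D a = D b := by
    intro a b hab haB hbB hgap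
    have hnotB : ∀ θ ∈ Set.Ioo a b, P θ ∈ Uo := by
      intro θ hθ
      by_contra hc
      have : θ ∈ Set.Ioo a b ∩ Bt := ⟨hθ, hc⟩
      rw [hgap] at this
      exact this
    have hmidI : (a+b)/2 ∈ Set.Ioo a b := ⟨by linarith, by linarith⟩
    obtain ⟨J₀, ⟨hJ₀A, hJ₀o⟩, hmidJ⟩ := hnotB _ hmidI
    have hIm : ∀ θ ∈ Set.Ioo a b, P θ ∈ J₀ := by
      have hpc : IsPreconnected (P '' Set.Ioo a b) :=
        (isPreconnected_Ioo).image P hPcont.continuousOn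
      set V : Set (sphere (0:ℂ) 1) := ⋃₀ {J | J ∈ A ∧ IsOpen J ∧ J ≠ J₀} with hVdef
      have hVo : IsOpen V := isOpen_sUnion (fun J hJ => hJ.2.1)
      have hdisjV : Disjoint J₀ V := by
        rw [Set.disjoint_left]
        rintro z hz ⟨K, ⟨hKA, _, hKne⟩, hzK⟩
        exact hKne (huniq K hKA J₀ hJ₀A z hzK hz)
      have hsub : P '' Set.Ioo a b ⊆ J₀ ∪ V := by
        rintro z ⟨θ, hθ, rfl⟩
        obtain ⟨K, ⟨hKA, hKo⟩, hzK⟩ := hnotB θ hθ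
        by_cases hKJ : K = J₀
        · left; rwa [hKJ] at hzK
        · right; exact ⟨K, ⟨hKA, hKo, hKJ⟩, hzK⟩
      have hne : (P '' Set.Ioo a b ∩ J₀).Nonempty :=
        ⟨P ((a+b)/2), ⟨(a+b)/2, hmidI, rfl⟩, hmidJ⟩
      have := hpc.subset_left_of_subset_union hJ₀o hVo hdisjV hsub hne
      intro θ hθ
      exact this ⟨θ, hθ, rfl⟩
    -- data about h J₀
    have hhJA : h J₀ ∈ A := hmaps hJ₀A
    have hhJo : IsOpen (h J₀) := by
      rw [← hcomp₁ J₀ hJ₀A]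
      exact (Homeomorph.isOpenMap g₁) J₀ hJ₀o
    have hhJconn : IsPreconnected (h J₀) := hopenconn _ hhJA hhJo
    have hwnot : p ∉ h J₀ := fun hc => hp ⟨h J₀, ⟨hhJA, hhJo⟩, hc⟩
    have hBw : ∀ θ : ℝ, P θ = p → θ ∈ Bt := by
      intro θ hθ
      simp only [hBtdef, Set.mem_compl_iff, Set.mem_preimage, hθ]
      exact hp
    have hBJ : ∀ θ ∈ Bt, P θ ∉ h J₀ := by
      intro θ hθ hc
      simp only [hBtdef, Set.mem_compl_iff, Set.mem_preimage] at hθ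
      exact hθ ⟨h J₀, ⟨hhJA, hhJo⟩, hc⟩
    -- the images of the gap under G₁ and G₂ are gaps mapping into h J₀
    have hGgap : ∀ (G : ℝ ≃ₜ ℝ) (hmono : StrictMono G) (g : sphere (0:ℂ) 1 ≃ₜ sphere (0:ℂ) 1),
        (∀ θ : ℝ, P (G θ) = g (P θ)) → g '' Uo = Uo → g '' J₀ = h J₀ →
        (G a ∈ Bt ∧ G b ∈ Bt) ∧ Set.Ioo (G a) (G b) ∩ Bt = ∅ ∧
          (∀ θ ∈ Set.Ioo (G a) (G b), P θ ∈ h J₀) := by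
      intro G hmono g hlift hgUo hgJ
      have hmemB : ∀ θ ∈ Bt, G θ ∈ Bt := by
        intro θ hθ
        simp only [hBtdef, Set.mem_compl_iff, Set.mem_preimage] at hθ ⊢
        rw [hlift]
        intro hc
        rw [← hgUo] at hc
        obtain ⟨y, hy, hye⟩ := hc
        exact hθ ((EquivLike.injective g) hye ▸ hy)
      refine ⟨⟨hmemB a haB, hmemB b hbB⟩, ?_, ?_⟩
      · ext t
        simp only [Set.mem_inter_iff, Set.mem_Ioo, Set.mem_empty_iff_false, iff_false, not_and,
          and_imp]
        intro h1 h2 h3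
        set s := G.symm t with hs
        have hGs : G s = t := G.apply_symm_apply t
        have hsI : s ∈ Set.Ioo a b := by
          constructor
          · have : G a < G s := by rw [hGs]; exact h1
            exact hmono.lt_iff_lt.mp this
          · have : G s < G b := by rw [hGs]; exact h2
            exact hmono.lt_iff_lt.mp this
        have := hnotB s hsI
        simp only [hBtdef, Set.mem_compl_iff, Set.mem_preimage] at h3
        apply h3
        rw [← hGs, hlift, ← hgUo]
        exact ⟨P s, this, rfl⟩
      · intro θ hθ
        set s := G.symm θ with hs
        have hGs : G s = θ := G.apply_symm_apply θ
        have hsI : s ∈ Set.Ioo a b := by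
          constructor
          · have : G a < G s := by rw [hGs]; exact hθ.1
            exact hmono.lt_iff_lt.mp this
          · have : G s < G b := by rw [hGs]; exact hθ.2
            exact hmono.lt_iff_lt.mp this
        rw [← hGs, hlift, ← hgJ]
        exact ⟨P s, hIm s hsI, rfl⟩
    obtain ⟨⟨h1a, h1b⟩, h1gap, h1im⟩ := hGgap G₁ hmono₁ g₁ hlift₁ hUinv₁ (hcomp₁ J₀ hJ₀A)
    obtain ⟨⟨h2a, h2b⟩, h2gap, h2im⟩ := hGgap G₂ hmono₂ g₂ hlift₂ hUinv₂ (hcomp₂ J₀ hJ₀A)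
    obtain ⟨k, hka, hkb⟩ := aux_gap_translate P hPeq hPsurj hPopen (h J₀) hhJconn p hwnot
      Bt hBper hBw hBJ (G₁ a) (G₁ b) (G₂ a) (G₂ b) (hmono₁ hab) (hmono₂ hab)
      h1a h1b h2a h2b h1gap h2gap h1im h2im
    constructor
    · exact ⟨-k, by simp only [hDdef]; push_cast; linarith⟩
    · simp only [hDdef]; linarith
  -- integrality of D on Bt
  have hZclosed : IsClosed {t : ℝ | ∃ k : ℤ, D t = k} := by
    have hset : {t : ℝ | ∃ k : ℤ, D t = k} = D ⁻¹' (Set.range ((↑) : ℤ → ℝ)) := by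
      ext t
      simp [eq_comm]
    rw [hset]
    exact (Int.isClosedEmbedding_coe_real.isClosed_range).preimage hDcont
  have hDintB : ∀ θ ∈ Bt, ∃ k : ℤ, D θ = k := by
    intro θ hθ
    have hcl : θ ∈ closure {t : ℝ | ∃ k : ℤ, D t = k} := by
      rw [Metric.mem_closure_iff]
      intro ε hε
      by_cases hcase : ∀ u ∈ Set.Ioo (θ - ε) (θ + ε), u ∈ Bt
      · -- find a singleton member nearby using density
        have hVo : IsOpen (P '' Set.Ioo (θ - ε) (θ + ε)) := hPopen _ isOpen_Ioo
        have hVne : (P '' Set.Ioo (θ - ε) (θ + ε)).Nonempty :=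
          ⟨P θ, θ, ⟨by linarith, by linarith⟩, rfl⟩
        obtain ⟨z, hzV, hzA⟩ := hdense.inter_open_nonempty _ hVo hVne
        obtain ⟨t, htI, htP⟩ := hzV
        obtain ⟨M, hMA, hzM⟩ := hzA
        have htB : t ∈ Bt := hcase t htI
        have hMsing : ∃ x', M = {x'} := by
          rcases hmem M hMA with hs | ⟨ho, _⟩
          · exact hs
          · exfalso
            simp only [hBtdef, Set.mem_compl_iff, Set.mem_preimage] at htB
            exact htB (htP ▸ ⟨M, ⟨hMA, ho⟩, hzM⟩)
        obtain ⟨x', rfl⟩ := hMsing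
        have hzx : z = x' := hzM
        have hgg : g₁ z = g₂ z := by
          have e1 : g₁ '' {x'} = h {x'} := hcomp₁ _ hMA
          have e2 : g₂ '' {x'} = h {x'} := hcomp₂ _ hMA
          rw [Set.image_singleton] at e1 e2
          have : ({g₁ x'} : Set (sphere (0:ℂ) 1)) = {g₂ x'} := by rw [e1, e2]
          rw [hzx]
          exact Set.singleton_eq_singleton_iff.mp this
        have hPt : P (G₁ t) = P (G₂ t) := by
          rw [hlift₁, hlift₂, htP, hgg]
        obtain ⟨k, hk⟩ := (hPeq _ _).mp hPt
        refine ⟨t, ⟨k, by simp only [hDdef]; linarith⟩, ?_⟩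
        rw [Real.dist_eq, abs_lt]
        constructor <;> [linarith [htI.2]; linarith [htI.1]]
      · push_neg at hcase
        obtain ⟨u, huI, huB⟩ := hcase
        -- build the gap around u
        have hlowne : (Bt ∩ Set.Iic u).Nonempty := by
          refine ⟨θ + (⌊u - θ⌋ : ℤ), hBper θ hθ _, ?_⟩
          have := Int.floor_le (u - θ)
          simp only [Set.mem_Iic]
          linarith
        have hlowbdd : BddAbove (Bt ∩ Set.Iic u) := ⟨u, fun t ht => ht.2⟩
        set a := sSup (Bt ∩ Set.Iic u) with hadef
        have haB : a ∈ Bt ∩ Set.Iic u :=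
          (hBtclosed.inter isClosed_Iic).csSup_mem hlowne hlowbdd
        have hau : a < u := lt_of_le_of_ne haB.2 (fun he => huB (he ▸ haB.1))
        have hupne : (Bt ∩ Set.Ici u).Nonempty := by
          refine ⟨θ + (⌈u - θ⌉ : ℤ), hBper θ hθ _, ?_⟩
          have := Int.le_ceil (u - θ)
          simp only [Set.mem_Ici]
          linarith
        have hupbdd : BddBelow (Bt ∩ Set.Ici u) := ⟨u, fun t ht => ht.2⟩
        set b := sInf (Bt ∩ Set.Ici u) with hbdef
        have hbB : b ∈ Bt ∩ Set.Ici u :=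
          (hBtclosed.inter isClosed_Ici).csInf_mem hupne hupbdd
        have hub : u < b := lt_of_le_of_ne hbB.2 (fun he => huB (he ▸ hbB.1))
        have hgapab : Set.Ioo a b ∩ Bt = ∅ := by
          ext t
          simp only [Set.mem_inter_iff, Set.mem_Ioo, Set.mem_empty_iff_false, iff_false,
            not_and, and_imp]
          intro h1 h2 h3
          rcases le_total t u with hle | hge
          · have : t ≤ a := le_csSup hlowbdd ⟨h3, hle⟩
            linarith
          · have : b ≤ t := csInf_le hupbdd ⟨h3, hge⟩
            linarith
        obtain ⟨⟨k, hk⟩, hDab⟩ := hDgap a b (lt_trans hau hub) haB.1 hbB.1 hgapab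
        rcases le_or_gt θ a with hθa | hθa
        · refine ⟨a, ⟨k, hk⟩, ?_⟩
          rw [Real.dist_eq, abs_lt]
          constructor
          · linarith [huI.2]
          · linarith
        · have hbθ : b ≤ θ := by
            by_contra hc
            push_neg at hc
            have : θ ∈ Set.Ioo a b ∩ Bt := ⟨⟨hθa, hc⟩, hθ⟩
            rw [hgapab] at this
            exact this
          refine ⟨b, ⟨k, by rw [← hDab]; exact hk⟩, ?_⟩
          rw [Real.dist_eq, abs_lt]
          constructor
          · linarith
          · linarith [huI.1]
    exact hZclosed.closure_subset hcl
  -- constancy of D on Bt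
  have hDle : ∀ a ∈ Bt, ∀ b ∈ Bt, a < b → D a = D b := by
    intro a haB b hbB hab
    set s := Set.Icc a b ∩ Bt ∩ {t | D t = D a} with hsdef
    have hsne : s.Nonempty := ⟨a, ⟨⟨le_refl a, hab.le⟩, haB⟩, rfl⟩
    have hsbdd : BddAbove s := ⟨b, fun t ht => ht.1.1.2⟩
    have hsclosed : IsClosed s :=
      (isClosed_Icc.inter hBtclosed).inter (isClosed_eq hDcont continuous_const)
    set c := sSup s with hcdef
    have hcs : c ∈ s := hsclosed.csSup_mem hsne hsbdd
    have hcb : c ≤ b := hcs.1.1.2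
    rcases eq_or_lt_of_le hcb with hceq | hclt
    · exact (hceq ▸ hcs.2).symm
    · exfalso
      have hcB : c ∈ Bt := hcs.1.2
      have hDc : D c = D a := hcs.2
      by_cases hnear : ∀ δ > 0, ∃ t, t ∈ Bt ∧ t ∈ Set.Ioc c b ∧ t < c + δ
      · have hcont1 : ContinuousAt D c := hDcont.continuousAt
        rw [Metric.continuousAt_iff] at hcont1
        obtain ⟨δ, hδ, hδprop⟩ := hcont1 1 one_pos
        obtain ⟨t, htB, htI, htδ⟩ := hnear δ hδ
        have hdist : dist t c < δ := by
          rw [Real.dist_eq, abs_lt]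
          constructor
          · linarith [htI.1]
          · linarith
        have h1 := hδprop hdist
        obtain ⟨k₁, hk₁⟩ := hDintB t htB
        obtain ⟨k₂, hk₂⟩ := hDintB c hcB
        have hne' : D t ≠ D c := by
          intro he
          have hts : t ∈ s := ⟨⟨⟨by linarith [hcs.1.1.1, htI.1], htI.2⟩, htB⟩, by
            simp only [Set.mem_setOf_eq]; rw [he, hDc]⟩
          have := le_csSup hsbdd hts
          linarith [htI.1]
        rw [Real.dist_eq] at h1
        rw [hk₁, hk₂] at h1 hne'
        have hkk : k₁ ≠ k₂ := fun he => hne' (by rw [he])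
        have habs : (1:ℝ) ≤ |(k₁:ℝ) - k₂| := by
          have h2 : k₁ - k₂ ≠ 0 := fun he => hkk (by omega)
          have h3 : (1:ℤ) ≤ |k₁ - k₂| := Int.one_le_abs h2
          calc (1:ℝ) ≤ ((|k₁ - k₂| : ℤ) : ℝ) := by exact_mod_cast h3
          _ = |(k₁:ℝ) - k₂| := by push_cast [Int.cast_abs]; ring_nf
        linarith
      · push_neg at hnear
        obtain ⟨δ, hδ, hδprop⟩ := hnear
        have hδb : c + δ ≤ b := hδprop b hbB ⟨hclt, le_refl b⟩
        have hdne : (Bt ∩ Set.Icc (c + δ) b).Nonempty := ⟨b, hbB, hδb, le_refl b⟩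
        have hdbdd : BddBelow (Bt ∩ Set.Icc (c + δ) b) := ⟨c + δ, fun t ht => ht.2.1⟩
        set d := sInf (Bt ∩ Set.Icc (c + δ) b) with hddef
        have hdB : d ∈ Bt ∩ Set.Icc (c + δ) b :=
          (hBtclosed.inter isClosed_Icc).csInf_mem hdne hdbdd
        have hcd : c < d := lt_of_lt_of_le (by linarith) hdB.2.1
        have hgapcd : Set.Ioo c d ∩ Bt = ∅ := by
          ext t
          simp only [Set.mem_inter_iff, Set.mem_Ioo, Set.mem_empty_iff_false, iff_false,
            not_and, and_imp]
          intro h1 h2 h3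
          have htb : t ≤ b := le_trans h2.le hdB.2.2
          have hge := hδprop t h3 ⟨h1, htb⟩
          have : d ≤ t := csInf_le hdbdd ⟨h3, hge, htb⟩
          linarith
        obtain ⟨_, hDcd⟩ := hDgap c d hcd hcB hdB.1 hgapcd
        have hds : d ∈ s := ⟨⟨⟨by linarith [hcs.1.1.1], hdB.2.2⟩, hdB.1⟩, by
          simp only [Set.mem_setOf_eq]; rw [← hDcd, hDc]⟩
        have := le_csSup hsbdd hds
        linarith
  have hDconst : ∀ a ∈ Bt, ∀ b ∈ Bt, D a = D b := by
    intro a haB b hbB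
    rcases lt_trichotomy a b with hc | hc | hc
    · exact hDle a haB b hbB hc
    · rw [hc]
    · exact (hDle b hbB a haB hc).symm
  -- the integer m and the orbit comparison
  obtain ⟨m, hm⟩ := hDintB θ₀ hθ₀B
  have hDm : ∀ θ ∈ Bt, G₁ θ = G₂ θ + m := by
    intro θ hθ
    have := hDconst θ hθ θ₀ hθ₀B
    simp only [hDdef] at this hm
    linarith
  have horb : ∀ n : ℕ, (⇑G₂)^[n] θ₀ ∈ Bt ∧ (⇑G₁)^[n] θ₀ = (⇑G₂)^[n] θ₀ + (n : ℝ) * m := by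
    intro n
    induction n with
    | zero => simpa using hθ₀B
    | succ n ih =>
      obtain ⟨hB, heq⟩ := ih
      refine ⟨?_, ?_⟩
      · rw [Function.iterate_succ_apply']
        exact (hBtinv _ hB).2
      · rw [Function.iterate_succ_apply', Function.iterate_succ_apply', heq]
        have hcast : ((n:ℝ) * m) = ((n * m : ℤ) : ℝ) := by push_cast; ring
        have h1 : G₁ ((⇑G₂)^[n] θ₀ + (n:ℝ) * m) = G₁ ((⇑G₂)^[n] θ₀) + (n:ℝ) * m := by
          rw [hcast]
          exact F₁.map_add_int _ (n * m)
        rw [h1, hDm _ hB]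
        push_cast
        ring
  have hpow₁ : ∀ (n : ℕ) (y : ℝ), (F₁ ^ n) y = (⇑G₁)^[n] y := by
    intro n y
    rw [← hF₁c]
    exact congrFun (CircleDeg1Lift.coe_pow F₁ n) y
  have hpow₂ : ∀ (n : ℕ) (y : ℝ), (F₂ ^ n) y = (⇑G₂)^[n] y := by
    intro n y
    rw [← hF₂c]
    exact congrFun (CircleDeg1Lift.coe_pow F₂ n) y
  have hlim : ∀ (F : CircleDeg1Lift) (G : ℝ ≃ₜ ℝ), (∀ (n : ℕ) (y : ℝ), (F ^ n) y = (⇑G)^[n] y) →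
      ∀ y : ℝ, Tendsto (fun n : ℕ => (⇑G)^[n] y / (n:ℝ)) atTop (𝓝 (F.translationNumber)) := by
    intro F G hFG y
    have h1 := F.tendsto_translationNumber y
    have h2 := h1.add (tendsto_const_div_atTop_nhds_zero_nat y)
    rw [add_zero] at h2
    apply h2.congr
    intro n
    rw [hFG n y]
    by_cases hn : (n:ℝ) = 0
    · simp [hn]
    · field_simp; ring
  refine ⟨F₁.translationNumber, F₂.translationNumber, hlim F₁ G₁ hpow₁ x, hlim F₂ G₂ hpow₂ x,
    m, ?_⟩
  have t₁ := F₁.tendsto_translationNumber θ₀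
  have t₂ := (F₂.tendsto_translationNumber θ₀).add (tendsto_const_nhds (x := (m:ℝ)))
  have hev : (fun n : ℕ => ((F₂ ^ n) θ₀ - θ₀)/(n:ℝ) + m) =ᶠ[atTop]
      (fun n : ℕ => ((F₁ ^ n) θ₀ - θ₀)/(n:ℝ)) := by
    rw [Filter.eventuallyEq_iff_exists_mem]
    refine ⟨Set.Ici 1, Ici_mem_atTop 1, fun n hn => ?_⟩
    have hn0 : (n:ℝ) ≠ 0 := Nat.cast_ne_zero.mpr (by exact_mod_cast Nat.one_le_iff_ne_zero.mp hn)
    show ((F₂ ^ n) θ₀ - θ₀) / (n:ℝ) + (m:ℝ) = ((F₁ ^ n) θ₀ - θ₀) / (n:ℝ)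
    rw [hpow₁, hpow₂, (horb n).2]
    field_simp
    ring
  have huniqlim := tendsto_nhds_unique (t₂.congr' hev) t₁
  linarith
end

section
/- Let U ⊆ ℝ² be the interior of the Warsaw circle, with the impression of the bad prime end equal to the limit segment {0} × [−1,1] ⊆ ∂U. Define H : Ū × ℝ → Ū × ℝ by H(x,y,t) = (x,y, y+t). Then H is a homeomorphism with H(U × ℝ) = U × ℝ, but the conjugate Ψ H Ψ⁻¹ : int(D²) × ℝ → int(D²) × ℝ (where Ψ(u,t) = (ψ(u), t) for a conformal map ψ : U → int(D²)) does not extend to a continuous map of D² × ℝ. -/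
open Metric Set Filter Topology

/-- Warsaw-circle example. Let `U ⊆ ℂ` be the interior of the Warsaw circle,
`ψ : U → int D²` a conformal (Riemann) map with inverse `φ`, such that the
impression of the bad prime end is the limit segment `{0} × [−1,1] ⊆ ∂U`.
The map `H(z,t) = (z, Im z + t)` is a homeomorphism of `Ū × ℝ` with
`H(U × ℝ) = U × ℝ`, but the conjugate `Ψ H Ψ⁻¹ : (w,t) ↦ (w, Im(φ w) + t)`
does not extend to a continuous map of `D² × ℝ`. -/
theorem stmt19
    (U : Set ℂ)
    (hUopen : IsOpen U) (hUbd : Bornology.IsBounded U) (hUconn : IsConnected U)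
    -- the sin(1/x) curve lies in the boundary of U
    (hsin : {z : ℂ | ∃ x : ℝ, 0 < x ∧ x ≤ 1 ∧
        z = (x : ℂ) + (Real.sin (1 / x) : ℂ) * Complex.I} ⊆ closure U \ U)
    -- the limit segment {0} × [−1,1] lies in the boundary of U
    (hseg : {z : ℂ | z.re = 0 ∧ z.im ∈ Icc (-1:ℝ) 1} ⊆ closure U \ U)
    -- ψ is a conformal homeomorphism from U onto the open unit disk, φ its inverse
    (ψ φ : ℂ → ℂ)
    (hψdiff : DifferentiableOn ℂ ψ U)
    (hψinj : Set.InjOn ψ U)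
    (hψsurj : ψ '' U = ball (0:ℂ) 1)
    (hφψ : ∀ z ∈ U, φ (ψ z) = z)
    (hψφ : ∀ w ∈ ball (0:ℂ) 1, φ w ∈ U ∧ ψ (φ w) = w)
    -- the impression of the bad prime end is exactly the limit segment
    (himp : ∃ w₀ ∈ sphere (0:ℂ) 1,
      {z : ℂ | z.re = 0 ∧ z.im ∈ Icc (-1:ℝ) 1} =
        {z : ℂ | ∃ s : ℕ → ℂ, (∀ n, s n ∈ ball (0:ℂ) 1) ∧
          Tendsto s atTop (𝓝 w₀) ∧ Tendsto (fun n => φ (s n)) atTop (𝓝 z)})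
    (H : ℂ × ℝ → ℂ × ℝ)
    (hH : ∀ p : ℂ × ℝ, H p = (p.1, p.1.im + p.2)) :
    Continuous H ∧
    Set.BijOn H (closure U ×ˢ (univ : Set ℝ)) (closure U ×ˢ (univ : Set ℝ)) ∧
    H '' (U ×ˢ (univ : Set ℝ)) = U ×ˢ (univ : Set ℝ) ∧
    ¬ ∃ F : ℂ × ℝ → ℂ × ℝ,
        ContinuousOn F (closedBall (0:ℂ) 1 ×ˢ (univ : Set ℝ)) ∧
        ∀ w ∈ ball (0:ℂ) 1, ∀ t : ℝ, F (w, t) = (w, (φ w).im + t) := by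

  have hmaps : ∀ S : Set ℂ, H '' (S ×ˢ (univ : Set ℝ)) = S ×ˢ (univ : Set ℝ) := by
    intro S
    ext p
    constructor
    · rintro ⟨q, ⟨hq1, -⟩, rfl⟩
      rw [hH]; exact ⟨hq1, trivial⟩
    · rintro ⟨hp1, -⟩
      exact ⟨(p.1, p.2 - p.1.im), ⟨hp1, trivial⟩, by rw [hH]; simp⟩
  refine ⟨?_, ?_, hmaps U, ?_⟩
  · have hfun : H = fun p => (p.1, p.1.im + p.2) := funext hH
    rw [hfun]
    exact continuous_fst.prodMk
      ((Complex.continuous_im.comp continuous_fst).add continuous_snd)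
  · refine ⟨fun p hp => ?_, fun p _ q _ h => ?_, fun p hp => ?_⟩
    · rw [hH]; exact ⟨hp.1, trivial⟩
    · rw [hH, hH] at h
      have h1 : p.1 = q.1 := (Prod.ext_iff.mp h).1
      have h2 := (Prod.ext_iff.mp h).2
      simp only [h1, add_right_inj] at h2
      exact Prod.ext h1 h2
    · exact ⟨(p.1, p.2 - p.1.im), ⟨hp.1, trivial⟩, by rw [hH]; simp⟩
  · rintro ⟨F, hFcont, hFeq⟩
    obtain ⟨w₀, hw₀, himp⟩ := himp
    have hi : Complex.I ∈ {z : ℂ | z.re = 0 ∧ z.im ∈ Icc (-1:ℝ) 1} := by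
      simp [Complex.I_re, Complex.I_im]
    have hni : -Complex.I ∈ {z : ℂ | z.re = 0 ∧ z.im ∈ Icc (-1:ℝ) 1} := by
      simp [Complex.I_re, Complex.I_im]
    rw [himp] at hi hni
    obtain ⟨s, hs, hsw, hsφ⟩ := hi
    obtain ⟨s', hs', hsw', hsφ'⟩ := hni
    have hw₀cb : w₀ ∈ closedBall (0:ℂ) 1 := sphere_subset_closedBall hw₀
    have hc : ContinuousWithinAt F (closedBall (0:ℂ) 1 ×ˢ (univ : Set ℝ)) (w₀, 0) :=
      hFcont (w₀, 0) ⟨hw₀cb, trivial⟩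
    have key : ∀ (u : ℕ → ℂ), (∀ n, u n ∈ ball (0:ℂ) 1) → Tendsto u atTop (𝓝 w₀) →
        ∀ z : ℂ, Tendsto (fun n => φ (u n)) atTop (𝓝 z) → F (w₀, 0) = (w₀, z.im) := by
      intro u hu huw z hz
      have h1 : Tendsto (fun n => ((u n, (0:ℝ)) : ℂ × ℝ)) atTop
          (𝓝[closedBall (0:ℂ) 1 ×ˢ (univ : Set ℝ)] (w₀, 0)) := by
        rw [tendsto_nhdsWithin_iff]
        exact ⟨huw.prodMk_nhds tendsto_const_nhds,
          Eventually.of_forall fun n => ⟨ball_subset_closedBall (hu n), trivial⟩⟩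
      have h2 : Tendsto (fun n => F (u n, 0)) atTop (𝓝 (F (w₀, 0))) := hc.tendsto.comp h1
      have h3 : Tendsto (fun n => F (u n, 0)) atTop (𝓝 (w₀, z.im)) := by
        have heq : ∀ n, F (u n, 0) = (u n, (φ (u n)).im) := fun n => by
          rw [hFeq _ (hu n) 0, add_zero]
        simp_rw [heq]
        exact huw.prodMk_nhds ((Complex.continuous_im.tendsto z).comp hz)
      exact tendsto_nhds_unique h2 h3
    have e1 := key s hs hsw Complex.I hsφ
    have e2 := key s' hs' hsw' (-Complex.I) hsφ'
    rw [e1] at e2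
    have : (1:ℝ) = -1 := by
      have := (Prod.ext_iff.mp e2).2
      simpa using this
    norm_num at this
end
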